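/- The Kostant partition function of sl(n) satisfies K_{nβ+r} = Σ_{ν ∈ Q^+} ⁽ⁿ⁾K_{nν+r} · K_{β−ν} for all β ∈ Q^+ and r ∈ Q^+/nQ^+, where ⁽ⁿ⁾K_μ is defined by Π_{α>0} Σ_{k=0}^{n-1} e^{kα} = Σ_{μ∈Q^+} ⁽ⁿ⁾K_μ e^μ. -/

import Mathlib

open scoped BigOperators

namespace SLnKostant

/-- The positive roots of `sl(n)`, indexed by pairs `i < j` (the root `e_i − e_j`). -/
def PRoots (n : ℕ) := {q : Fin n × Fin n // q.1 < q.2}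

instance (n : ℕ) : Fintype (PRoots n) := by unfold PRoots; infer_instance

/-- The root vector `e_i − e_j ∈ ℤ^n` of a positive root. -/
def rootv {n : ℕ} (q : PRoots n) : Fin n → ℤ :=
  Pi.single q.1.1 1 - Pi.single q.1.2 1

/-- The `i`-th simple root `α_i = e_i − e_{i+1}` as a positive root. -/
def sroot {N : ℕ} (i : Fin N) : PRoots (N + 1) :=
  ⟨(i.castSucc, i.succ), Fin.castSucc_lt_succ⟩

/-- The Kostant partition function `K_β` of `sl(N+1)`: the number of ways of writing
`β` as a nonnegative integral combination of positive roots. -/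
noncomputable def K (N : ℕ) (β : Fin (N + 1) → ℤ) : ℕ :=
  Nat.card {f : PRoots (N + 1) → ℕ // ∑ q : PRoots (N + 1), (f q : ℤ) • rootv q = β}

/-- The truncated partition function `⁽ⁿ⁾K_μ` (`n = N+1`), defined by
`Π_{α>0} (Σ_{k=0}^{n-1} e^{kα}) = Σ_μ ⁽ⁿ⁾K_μ e^μ`: the number of ways of writing `μ`
as a combination of positive roots with coefficients in `{0,…,n−1}`. -/
noncomputable def Kn (N : ℕ) (μ : Fin (N + 1) → ℤ) : ℕ :=
  Nat.card {f : PRoots (N + 1) → ℕ //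
    (∀ q, f q ≤ N) ∧ ∑ q : PRoots (N + 1), (f q : ℤ) • rootv q = μ}

/-! ### Auxiliary machinery -/

/-- Solutions counting `K`. -/
abbrev Sols (N : ℕ) (μ : Fin (N + 1) → ℤ) : Type :=
  {f : PRoots (N + 1) → ℕ // ∑ q : PRoots (N + 1), (f q : ℤ) • rootv q = μ}

/-- Bounded solutions counting `Kn`. -/
abbrev BSols (N : ℕ) (μ : Fin (N + 1) → ℤ) : Type :=
  {f : PRoots (N + 1) → ℕ //
    (∀ q, f q ≤ N) ∧ ∑ q : PRoots (N + 1), (f q : ℤ) • rootv q = μ}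

/-- A linear functional which is positive on all positive roots. -/
def wt (N : ℕ) (β : Fin (N + 1) → ℤ) : ℤ :=
  ∑ i : Fin (N + 1), ((N : ℤ) - ((i : ℕ) : ℤ)) * β i

lemma wt_rootv {N : ℕ} (q : PRoots (N + 1)) :
    wt N (rootv q) = ((q.1.2 : ℕ) : ℤ) - ((q.1.1 : ℕ) : ℤ) := by
  unfold wt rootv
  have h1 : ∀ a : Fin (N + 1),
      ∑ i : Fin (N + 1), ((N : ℤ) - ((i : ℕ) : ℤ)) * (Pi.single a 1 : Fin (N + 1) → ℤ) i
        = (N : ℤ) - ((a : ℕ) : ℤ) := by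
    intro a
    rw [Finset.sum_eq_single a]
    · simp
    · intro b _ hb; simp [Pi.single_apply, hb]
    · simp
  simp only [Pi.sub_apply, mul_sub, Finset.sum_sub_distrib, h1]
  ring

lemma wt_sum {N : ℕ} (c : PRoots (N + 1) → ℤ) :
    wt N (∑ q : PRoots (N + 1), c q • rootv q)
      = ∑ q : PRoots (N + 1), c q * wt N (rootv q) := by
  unfold wt
  simp only [Finset.sum_apply, Pi.smul_apply, smul_eq_mul, Finset.mul_sum]
  rw [Finset.sum_comm]
  exact Finset.sum_congr rfl fun q _ => Finset.sum_congr rfl fun i _ => by ring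

lemma one_le_wt_rootv {N : ℕ} (q : PRoots (N + 1)) : 1 ≤ wt N (rootv q) := by
  rw [wt_rootv]
  have h := q.2
  have : (q.1.1 : ℕ) < (q.1.2 : ℕ) := h
  omega

lemma sols_bound {N : ℕ} {μ : Fin (N + 1) → ℤ} (g : PRoots (N + 1) → ℕ)
    (hg : ∑ q : PRoots (N + 1), (g q : ℤ) • rootv q = μ) (q0 : PRoots (N + 1)) :
    g q0 ≤ (wt N μ).toNat := by
  have h1 : ∑ q : PRoots (N + 1), (g q : ℤ) * wt N (rootv q) = wt N μ := by
    rw [← wt_sum, hg]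
  have h2 : (g q0 : ℤ) ≤ wt N μ := by
    calc (g q0 : ℤ) ≤ (g q0 : ℤ) * wt N (rootv q0) :=
          le_mul_of_one_le_right (by positivity) (one_le_wt_rootv q0)
      _ ≤ ∑ q : PRoots (N + 1), (g q : ℤ) * wt N (rootv q) :=
          Finset.single_le_sum (f := fun q => (g q : ℤ) * wt N (rootv q))
            (fun q _ => mul_nonneg (by positivity) (le_trans zero_le_one (one_le_wt_rootv q)))
            (Finset.mem_univ q0)
      _ = wt N μ := h1
  omega

instance {N : ℕ} {μ : Fin (N + 1) → ℤ} : Finite (Sols N μ) := by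
  refine Finite.of_injective
    (fun x : Sols N μ =>
      (fun q => (⟨x.1 q, Nat.lt_succ_of_le (sols_bound x.1 x.2 q)⟩ :
        Fin ((wt N μ).toNat + 1)) : PRoots (N + 1) → Fin ((wt N μ).toNat + 1))) ?_
  intro a b hab
  apply Subtype.ext
  funext q
  have := congrFun hab q
  exact congrArg Fin.val this

instance {N : ℕ} {μ : Fin (N + 1) → ℤ} : Finite (BSols N μ) := by
  refine Finite.of_injective
    (fun x : BSols N μ =>
      (fun q => (⟨x.1 q, Nat.lt_succ_of_le (x.2.1 q)⟩ :
        Fin (N + 1)) : PRoots (N + 1) → Fin (N + 1))) ?_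
  intro a b hab
  apply Subtype.ext
  funext q
  exact congrArg Fin.val (congrFun hab q)

lemma nat_card_sigma {ι : Type*} [Fintype ι] (f : ι → Type*) [hf : ∀ i, Finite (f i)] :
    Nat.card (Σ i, f i) = ∑ i, Nat.card (f i) := by
  letI : ∀ i, Fintype (f i) := fun i => Fintype.ofFinite (f i)
  simp only [Nat.card_eq_fintype_card, Fintype.card_sigma]

lemma comb (N : ℕ) (g s : PRoots (N + 1) → ℕ) :
    ∑ q : PRoots (N + 1), (((N + 1) * g q + s q : ℕ) : ℤ) • rootv q
      = (N + 1 : ℤ) • ∑ q : PRoots (N + 1), (g q : ℤ) • rootv q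
        + ∑ q : PRoots (N + 1), (s q : ℤ) • rootv q := by
  rw [Finset.smul_sum, ← Finset.sum_add_distrib]
  refine Finset.sum_congr rfl fun q _ => ?_
  rw [smul_smul, ← add_smul]
  norm_cast

lemma main (N : ℕ) (r β : Fin (N + 1) → ℤ) :
    K N ((N + 1 : ℤ) • β + r) =
      ∑ᶠ ν : Fin (N + 1) → ℤ, Kn N ((N + 1 : ℤ) • ν + r) * K N (β - ν) := by
  classical
  -- The finite set of possible ν's
  set V : Finset (Fin (N + 1) → ℤ) :=
    (Fintype.piFinset fun _ : PRoots (N + 1) => Finset.range (N + 1)).image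
      (fun s : PRoots (N + 1) → ℕ =>
        fun i => ((∑ q : PRoots (N + 1), (s q : ℤ) • rootv q) i - r i) / (N + 1)) with hV
  have mem_V : ∀ (ν : Fin (N + 1) → ℤ) (s : PRoots (N + 1) → ℕ), (∀ q, s q ≤ N) →
      (∑ q : PRoots (N + 1), (s q : ℤ) • rootv q = (N + 1 : ℤ) • ν + r) → ν ∈ V := by
    intro ν s hs hsum
    rw [hV, Finset.mem_image]
    refine ⟨s, ?_, ?_⟩
    · rw [Fintype.mem_piFinset]
      intro q
      rw [Finset.mem_range]
      exact Nat.lt_succ_of_le (hs q)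
    · funext i
      rw [hsum]
      simp only [Pi.add_apply, Pi.smul_apply, smul_eq_mul, add_sub_cancel_right]
      exact Int.mul_ediv_cancel_left _ (by positivity)
  -- The bijection
  let φ : (Σ ν : V, BSols N ((N + 1 : ℤ) • (ν : Fin (N + 1) → ℤ) + r) × Sols N (β - ν)) →
      Sols N ((N + 1 : ℤ) • β + r) := fun x =>
    ⟨fun q => (N + 1) * x.2.2.1 q + x.2.1.1 q, by
      have hg := x.2.2.2
      have hs2 := x.2.1.2.2
      rw [comb, hg, hs2, smul_sub]
      abel⟩
  have hφ : Function.Bijective φ := by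
    constructor
    · rintro ⟨⟨ν, hν⟩, ⟨s, hs, hs2⟩, ⟨g, hg⟩⟩ ⟨⟨ν', hν'⟩, ⟨s', hs', hs2'⟩, ⟨g', hg'⟩⟩ h
      have h1 : ∀ q, (N + 1) * g q + s q = (N + 1) * g' q + s' q := by
        intro q
        exact congrFun (congrArg Subtype.val h) q
      have hmod : ∀ (a b : ℕ), b ≤ N → ((N + 1) * a + b) % (N + 1) = b := by
        intro a b hb
        rw [Nat.mul_add_mod]
        exact Nat.mod_eq_of_lt (by omega)
      have hss : s = s' := by
        funext q
        have := congrArg (· % (N + 1)) (h1 q)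
        simpa [hmod _ _ (hs q), hmod _ _ (hs' q)] using this
      subst hss
      have hgg : g = g' := by
        funext q
        have h2 := h1 q
        have h3 : (N + 1) * g q = (N + 1) * g' q := by omega
        exact Nat.eq_of_mul_eq_mul_left (Nat.succ_pos N) h3
      subst hgg
      have hνν : ν = ν' := by
        have : (N + 1 : ℤ) • ν + r = (N + 1 : ℤ) • ν' + r := by rw [← hs2, ← hs2']
        funext i
        have h2 := congrFun this i
        simp only [Pi.add_apply, Pi.smul_apply, smul_eq_mul] at h2
        have hN : (N + 1 : ℤ) ≠ 0 := by positivity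
        exact mul_left_cancel₀ hN (add_right_cancel h2)
      subst hνν
      rfl
    · rintro ⟨f, hf⟩
      have hd : ∑ q : PRoots (N + 1), (f q : ℤ) • rootv q
          = (N + 1 : ℤ) • ∑ q : PRoots (N + 1), ((f q / (N + 1) : ℕ) : ℤ) • rootv q
            + ∑ q : PRoots (N + 1), ((f q % (N + 1) : ℕ) : ℤ) • rootv q := by
        rw [← comb]
        exact Finset.sum_congr rfl fun q _ => by rw [Nat.div_add_mod]
      have hg : ∑ q : PRoots (N + 1), ((f q / (N + 1) : ℕ) : ℤ) • rootv q
          = β - (β - ∑ q : PRoots (N + 1), ((f q / (N + 1) : ℕ) : ℤ) • rootv q) :=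
        (sub_sub_cancel β _).symm
      have hs2 : ∑ q : PRoots (N + 1), ((f q % (N + 1) : ℕ) : ℤ) • rootv q
          = (N + 1 : ℤ) • (β - ∑ q : PRoots (N + 1), ((f q / (N + 1) : ℕ) : ℤ) • rootv q)
            + r := by
        have h2 : ∑ q : PRoots (N + 1), ((f q % (N + 1) : ℕ) : ℤ) • rootv q
            = ((N + 1 : ℤ) • ∑ q : PRoots (N + 1), ((f q / (N + 1) : ℕ) : ℤ) • rootv q
                + ∑ q : PRoots (N + 1), ((f q % (N + 1) : ℕ) : ℤ) • rootv q)
              - (N + 1 : ℤ) • ∑ q : PRoots (N + 1), ((f q / (N + 1) : ℕ) : ℤ) • rootv q := by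
          abel
        rw [h2, ← hd, hf, smul_sub]
        abel
      have hsb : ∀ q, f q % (N + 1) ≤ N := by
        intro q
        have := Nat.mod_lt (f q) (y := N + 1) (Nat.succ_pos N)
        omega
      refine ⟨⟨⟨_, mem_V _ _ hsb hs2⟩, ⟨_, hsb, hs2⟩, ⟨_, hg⟩⟩, ?_⟩
      apply Subtype.ext
      funext q
      exact Nat.div_add_mod (f q) (N + 1)
  -- Counting
  have hcard : K N ((N + 1 : ℤ) • β + r)
      = ∑ ν ∈ V, Kn N ((N + 1 : ℤ) • ν + r) * K N (β - ν) := by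
    have h0 : K N ((N + 1 : ℤ) • β + r)
        = Nat.card (Σ ν : V, BSols N ((N + 1 : ℤ) • (ν : Fin (N + 1) → ℤ) + r) × Sols N (β - ν)) :=
      (Nat.card_congr (Equiv.ofBijective φ hφ)).symm
    rw [h0, nat_card_sigma]
    rw [← Finset.sum_coe_sort V (fun ν => Kn N ((N + 1 : ℤ) • ν + r) * K N (β - ν))]
    exact Finset.sum_congr rfl fun ν _ => by rw [Nat.card_prod]; rfl
  rw [hcard]
  refine (finsum_eq_finset_sum_of_support_subset _ ?_).symm
  intro ν hν
  simp only [Function.mem_support] at hν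
  have hKn : Kn N ((N + 1 : ℤ) • ν + r) ≠ 0 := fun h => hν (by rw [h, zero_mul])
  have hne : Nonempty (BSols N ((N + 1 : ℤ) • ν + r)) := (Nat.card_ne_zero.mp hKn).1
  obtain ⟨s, hs, hsum⟩ := hne
  exact mem_V ν s hs hsum

/-- the Kostant partition function of `sl(n)` (`n = N+1`) satisfies
`K_{nβ+r} = Σ_{ν ∈ Q⁺} ⁽ⁿ⁾K_{nν+r} K_{β−ν}` for all `β ∈ Q⁺` and all
representatives `r = Σ k_i α_i`, `0 ≤ k_i ≤ n−1`, of `Q⁺/nQ⁺`. -/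
theorem statement8 (N : ℕ) (k : Fin N → ℕ) (hk : ∀ i, k i ≤ N)
    (β : Fin (N + 1) → ℤ) (hβ : ∃ g : Fin N → ℕ, β = ∑ i, (g i : ℤ) • rootv (sroot i)) :
    K N ((N + 1 : ℤ) • β + ∑ i, (k i : ℤ) • rootv (sroot i)) =
      ∑ᶠ ν : Fin (N + 1) → ℤ,
        Kn N ((N + 1 : ℤ) • ν + ∑ i, (k i : ℤ) • rootv (sroot i)) * K N (β - ν) := by
  exact main N (∑ i, (k i : ℤ) • rootv (sroot i)) β

end SLnKostant
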